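/- Let K be a normal Hopf subalgebra of a finite-dimensional semisimple Hopf algebra H. Then F(K) and K^⊥ are D(H)-submodules of H* (with H* the D(H)-module induced from the trivial H-module), each a sum of full homogeneous components, and the decomposition H* = F(K) ⊕ K^⊥ is a decomposition of D(H)-modules. -/

import Mathlib

open TensorProduct

noncomputable section

namespace Paper

set_option linter.unusedSectionVars false

variable (k : Type) [Field k]



section Conv

variable (H : Type) [AddCommGroup H] [Module k H] [Coalgebra k H]

/-- Convolution product on the dual of a coalgebra. -/
def conv (f g : Module.Dual k H) : Module.Dual k H :=
  (LinearMap.mul' k k) ∘ₗ (TensorProduct.map f g) ∘ₗ (Coalgebra.comul (R := k))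

end Conv

section Fourier

variable (H : Type) [Ring H] [Algebra k H]

/-- The Fourier transform associated to a functional `t`: `fourier t a = (b ↦ t (b * a))`. -/
def fourier (t : Module.Dual k H) : H →ₗ[k] Module.Dual k H where
  toFun a := t ∘ₗ LinearMap.mulRight k a
  map_add' a b := by ext x; simp [mul_add]
  map_smul' c a := by ext x; simp [mul_smul_comm]

end Fourier

section Act

variable (H : Type) [Ring H] [HopfAlgebra k H]

/-- The bilinear map sending `p ⊗ q` to the operator `x ↦ p * x * q`. -/
def sandwich : H ⊗[k] H →ₗ[k] (H →ₗ[k] H) :=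
  TensorProduct.lift
    { toFun := fun p =>
        { toFun := fun q => (LinearMap.mulLeft k p) ∘ₗ (LinearMap.mulRight k q)
          map_add' := fun q r => by ext x; simp [mul_add]
          map_smul' := fun c q => by ext x; simp [mul_smul_comm] }
      map_add' := fun p p' => by ext q x; simp [add_mul]
      map_smul' := fun c p => by ext q x; simp [smul_mul_assoc] }

/-- The (left) adjoint action of `H` on itself: `adAct a x = ∑ a₁ * x * S(a₂)`. -/
def adAct : H →ₗ[k] (H →ₗ[k] H) :=
  (sandwich k H) ∘ₗ (LinearMap.lTensor H (HopfAlgebra.antipode (R := k))) ∘ₗ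
    (Coalgebra.comul (R := k))

/-- The action of `a ∈ H` on `f ∈ H*` given by `(a · f)(x) = f(∑ S(a₂) x a₁)`
(the coadjoint action appearing in the `D(H)`-module `H*`; here `S = S⁻¹` since `S² = id`). -/
def coadAct (a : H) (f : Module.Dual k H) : Module.Dual k H :=
  f ∘ₗ (sandwich k H
    ((LinearMap.rTensor H (HopfAlgebra.antipode (R := k)))
      ((TensorProduct.comm k H H) (Coalgebra.comul (R := k) a))))

/-- The action of `f ∈ H*` on `H` given by `f · h = ∑ f(S(h₁)) h₂` (with `S = S⁻¹`). -/
def dualAct (f : Module.Dual k H) : H →ₗ[k] H :=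
  (TensorProduct.lid k H).toLinearMap ∘ₗ
    (LinearMap.rTensor H (f ∘ₗ HopfAlgebra.antipode (R := k))) ∘ₗ (Coalgebra.comul (R := k))

/-- The operator `a ↦ ∑ a₁ χ(S(a₂))` associated to a functional `χ`. -/
def chiOp (χ : Module.Dual k H) : H →ₗ[k] H :=
  (TensorProduct.rid k H).toLinearMap ∘ₗ
    (LinearMap.lTensor H (χ ∘ₗ HopfAlgebra.antipode (R := k))) ∘ₗ (Coalgebra.comul (R := k))

/-- The map `v ↦ ∑ (S(v₃) * v₁) ⊗ v₂`. -/
def conormalMap : H →ₗ[k] H ⊗[k] H :=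
  (TensorProduct.comm k H H).toLinearMap ∘ₗ
  (LinearMap.lTensor H (LinearMap.mul' k H)) ∘ₗ
  (TensorProduct.assoc k H H H).toLinearMap ∘ₗ
  (TensorProduct.comm k H (H ⊗[k] H)).toLinearMap ∘ₗ
  (LinearMap.lTensor H (LinearMap.lTensor H (HopfAlgebra.antipode (R := k)))) ∘ₗ
  (LinearMap.lTensor H (Coalgebra.comul (R := k))) ∘ₗ
  (Coalgebra.comul (R := k))

/-- A subspace `I ⊆ H` is co-normal if `∑ S(v₃)v₁ ⊗ v₂ ∈ H ⊗ I` for every `v ∈ I`. -/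
def IsConormal (I : Submodule k H) : Prop :=
  ∀ v ∈ I, conormalMap k H v ∈ LinearMap.range (LinearMap.lTensor H I.subtype)

/-- The adjoint action of `H*` on itself, written via the canonical identifications:
`(adDual f g)(x) = ∑ f(x₁ * S(x₃)) g(x₂)`, i.e. `adDual f g = ∑ f₁ * g * S(f₂)` in `H*`. -/
def adDual (f g : Module.Dual k H) : Module.Dual k H :=
  (LinearMap.mul' k k) ∘ₗ (TensorProduct.map f g) ∘ₗ
  (LinearMap.rTensor H (LinearMap.mul' k H)) ∘ₗ
  (TensorProduct.assoc k H H H).symm.toLinearMap ∘ₗ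
  (LinearMap.lTensor H (TensorProduct.comm k H H).toLinearMap) ∘ₗ
  (LinearMap.lTensor H (LinearMap.lTensor H (HopfAlgebra.antipode (R := k)))) ∘ₗ
  (LinearMap.lTensor H (Coalgebra.comul (R := k))) ∘ₗ
  (Coalgebra.comul (R := k))

end Act

section Char

variable (H : Type) [Ring H] [Algebra k H]

/-- The character of an `H`-module `M` (trace of the action). -/
def moduleChar (M : Type) [AddCommGroup M] [Module k M] [Module H M]
    [IsScalarTower k H M] : Module.Dual k H :=
  (LinearMap.trace k M) ∘ₗ (Algebra.lsmul k k M : H →ₐ[k] Module.End k M).toLinearMap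

/-- The character ring `C(H)` of `H`, as a subspace of `H*`: the span of characters of
finite-dimensional `H`-modules. -/
def charRing : Submodule k (Module.Dual k H) :=
  Submodule.span k {f | ∃ (M : Type) (_ : AddCommGroup M) (_ : Module k M) (_ : Module H M)
      (_ : IsScalarTower k H M) (_ : Module.Finite k M), f = moduleChar k H M}

/-- `f` is an irreducible character of `H`. -/
def IsIrrChar (f : Module.Dual k H) : Prop :=
  ∃ (M : Type) (_ : AddCommGroup M) (_ : Module k M) (_ : Module H M)
      (_ : IsScalarTower k H M), Module.Finite k M ∧ IsSimpleModule H M ∧ f = moduleChar k H M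

end Char




section Ind

variable (K H : Type) [Ring K] [Ring H] [HopfAlgebra k K] [HopfAlgebra k H]
variable (i : K →ₐc[k] H)
variable (V : Type) [AddCommGroup V] [Module k V] [Module K V] [IsScalarTower k K V]

/-- The subspace of `H ⊗ V` by which one quotients to obtain the induced module `H ⊗_K V`. -/
def indRel : Submodule k (H ⊗[k] V) :=
  Submodule.span k {z | ∃ (h : H) (x : K) (v : V), z = (h * i x) ⊗ₜ[k] v - h ⊗ₜ[k] (x • v)}

/-- The induced module `H ⊗_K V`. -/
abbrev IndMod := (H ⊗[k] V) ⧸ indRel k K H i V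

lemma indRel_mapsTo (h' : H) :
    (indRel k K H i V).map ((LinearMap.mulLeft k h').rTensor V) ≤ indRel k K H i V := by
  rw [indRel, Submodule.map_span]
  refine Submodule.span_le.2 ?_
  rintro _ ⟨_, ⟨h, x, v, rfl⟩, rfl⟩
  refine Submodule.subset_span ⟨h' * h, x, v, ?_⟩
  simp [mul_assoc]

/-- Left multiplication by `h' : H` on the induced module. -/
def indSmul (h' : H) : IndMod k K H i V →ₗ[k] IndMod k K H i V :=
  Submodule.mapQ _ _ ((LinearMap.mulLeft k h').rTensor V)
    (Submodule.map_le_iff_le_comap.mp (indRel_mapsTo k K H i V h'))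

lemma indSmul_mk (h' h : H) (v : V) :
    indSmul k K H i V h' (Submodule.Quotient.mk (h ⊗ₜ[k] v)) =
      Submodule.Quotient.mk ((h' * h) ⊗ₜ[k] v) := rfl

/-- The algebra map `H → End (IndMod)` defining the `H`-module structure on the
induced module. -/
def indActHom : H →ₐ[k] Module.End k (IndMod k K H i V) where
  toFun h' := indSmul k K H i V h'
  map_one' := by
    refine Submodule.linearMap_qext _ ?_
    ext h v
    simp only [LinearMap.coe_comp, Function.comp_apply, AlgebraTensorModule.curry_apply,
      curry_apply, LinearMap.coe_restrictScalars, Submodule.mkQ_apply, indSmul_mk, one_mul,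
      Module.End.one_apply]
  map_mul' a b := by
    refine Submodule.linearMap_qext _ ?_
    ext h v
    simp only [LinearMap.coe_comp, Function.comp_apply, AlgebraTensorModule.curry_apply,
      curry_apply, LinearMap.coe_restrictScalars, Submodule.mkQ_apply, indSmul_mk,
      Module.End.mul_apply, mul_assoc]
  map_zero' := by
    refine Submodule.linearMap_qext _ ?_
    ext h v
    simp only [LinearMap.coe_comp, Function.comp_apply, AlgebraTensorModule.curry_apply,
      curry_apply, LinearMap.coe_restrictScalars, Submodule.mkQ_apply, indSmul_mk, zero_mul,
      LinearMap.zero_apply]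
    rw [zero_tmul]
    exact Submodule.Quotient.mk_eq_zero _ |>.2 (Submodule.zero_mem _)
  map_add' a b := by
    refine Submodule.linearMap_qext _ ?_
    ext h v
    simp only [LinearMap.coe_comp, Function.comp_apply, AlgebraTensorModule.curry_apply,
      curry_apply, LinearMap.coe_restrictScalars, Submodule.mkQ_apply, indSmul_mk,
      LinearMap.add_apply, add_mul, add_tmul]
    rw [Submodule.Quotient.mk_add]
  commutes' c := by
    refine Submodule.linearMap_qext _ ?_
    ext h v
    simp only [LinearMap.coe_comp, Function.comp_apply, AlgebraTensorModule.curry_apply,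
      curry_apply, LinearMap.coe_restrictScalars, Submodule.mkQ_apply, indSmul_mk,
      Module.algebraMap_end_apply]
    rw [← Submodule.Quotient.mk_smul, smul_tmul', Algebra.smul_def]

instance : Module H (IndMod k K H i V) :=
  Module.compHom _ (indActHom k K H i V).toRingHom

instance : IsScalarTower k H (IndMod k K H i V) where
  smul_assoc c h z := by
    change indActHom k K H i V (c • h) z = c • (indActHom k K H i V h z)
    rw [map_smul]
    rfl

instance [Module.Finite k H] [Module.Finite k V] : Module.Finite k (IndMod k K H i V) :=
  Module.Finite.of_surjective (indRel k K H i V).mkQ (Submodule.Quotient.mk_surjective _)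

end Ind




section Subcoalg

variable (H : Type) [AddCommGroup H] [Module k H] [Coalgebra k H]

/-- `C` is a subcoalgebra of `H` if `Δ(C) ⊆ C ⊗ C`. -/
def IsSubcoalgebra (C : Submodule k H) : Prop :=
  ∀ x ∈ C, Coalgebra.comul (R := k) x ∈
    LinearMap.range (TensorProduct.map C.subtype C.subtype)

/-- A simple (nonzero, minimal) subcoalgebra. -/
def IsSimpleSubcoalgebra (C : Submodule k H) : Prop :=
  IsSubcoalgebra k H C ∧ C ≠ ⊥ ∧
    ∀ D : Submodule k H, D ≤ C → IsSubcoalgebra k H D → D = ⊥ ∨ D = C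

/-- The coaction `C → H ⊗ C` of a subcoalgebra, obtained by corestricting `Δ`. -/
def coact (C : Submodule k H) (hC : IsSubcoalgebra k H C) : C →ₗ[k] H ⊗[k] C :=
  ((LinearEquiv.ofInjective (LinearMap.lTensor H C.subtype)
      (Module.Flat.lTensor_preserves_injective_linearMap C.subtype C.injective_subtype)).symm :
        LinearMap.range (LinearMap.lTensor H C.subtype) ≃ₗ[k] H ⊗[k] C) ∘ₗ
    (LinearMap.codRestrict (LinearMap.range (LinearMap.lTensor H C.subtype))
      ((Coalgebra.comul (R := k)) ∘ₗ C.subtype)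
      (fun x => by
        obtain ⟨y, hy⟩ := hC x x.2
        exact ⟨(LinearMap.rTensor C C.subtype) y, by
          rw [← LinearMap.comp_apply, LinearMap.lTensor_comp_rTensor, hy]; rfl⟩))

variable [FiniteDimensional k H]

/-- The character `d_C ∈ H` of a finite-dimensional subcoalgebra `C ⊆ H`, viewed as a left
`H`-comodule; in the notation of the paper, `d_C = ∑_{d ∈ Irr(C)} ε(d) d`. -/
def dC (C : Submodule k H) (hC : IsSubcoalgebra k H C) : H :=
  (TensorProduct.rid k H)
    ((LinearMap.lTensor H (contractRight k C))
      ((TensorProduct.assoc k H C (Module.Dual k C))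
        ((LinearMap.rTensor (Module.Dual k C) (coact k H C hC))
          (coevaluation k C 1))))

end Subcoalg

section TensorMod

variable (H : Type) [Ring H] [HopfAlgebra k H]
variable (M N : Type) [AddCommGroup M] [Module k M] [Module H M] [IsScalarTower k H M]
variable [AddCommGroup N] [Module k N] [Module H N] [IsScalarTower k H N]

/-- The representation of `H` on `M ⊗ N` via comultiplication. -/
def tensorRep : H →ₐ[k] Module.End k (M ⊗[k] N) :=
  (Module.endTensorEndAlgHom (R := k) (S := k) (A := k) (M := M) (N := N)).comp
    ((Algebra.TensorProduct.map
        (Algebra.lsmul k k M : H →ₐ[k] Module.End k M)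
        (Algebra.lsmul k k N : H →ₐ[k] Module.End k N)).comp
      (Bialgebra.comulAlgHom k H))

end TensorMod

/-- The tensor product of two `H`-modules, with the diagonal `H`-action. -/
def TensorMod (k : Type) [Field k] (H : Type) [Ring H] [HopfAlgebra k H]
    (M N : Type) [AddCommGroup M] [Module k M] [Module H M] [IsScalarTower k H M]
    [AddCommGroup N] [Module k N] [Module H N] [IsScalarTower k H N] : Type := M ⊗[k] N

section TensorMod2

variable (H : Type) [Ring H] [HopfAlgebra k H]
variable (M N : Type) [AddCommGroup M] [Module k M] [Module H M] [IsScalarTower k H M]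
variable [AddCommGroup N] [Module k N] [Module H N] [IsScalarTower k H N]

instance : AddCommGroup (TensorMod k H M N) := inferInstanceAs (AddCommGroup (M ⊗[k] N))
instance : Module k (TensorMod k H M N) := inferInstanceAs (Module k (M ⊗[k] N))

instance : Module H (TensorMod k H M N) :=
  Module.compHom (M ⊗[k] N) (tensorRep k H M N).toRingHom

instance : IsScalarTower k H (TensorMod k H M N) where
  smul_assoc c h z := by
    change tensorRep k H M N (c • h) z = c • (tensorRep k H M N h z)
    rw [map_smul]
    rfl

instance [Module.Finite k M] [Module.Finite k N] : Module.Finite k (TensorMod k H M N) :=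
  inferInstanceAs (Module.Finite k (M ⊗[k] N))

end TensorMod2

section ResMod

variable (K H : Type) [Ring K] [Ring H] [HopfAlgebra k K] [HopfAlgebra k H]
variable (i : K →ₐc[k] H)
variable (M : Type) [AddCommGroup M] [Module k M] [Module H M] [IsScalarTower k H M]

end ResMod

/-- The restriction of an `H`-module to `K` along `i`. -/
def ResMod (k : Type) [Field k] (K H : Type) [Ring K] [Ring H] [HopfAlgebra k K]
    [HopfAlgebra k H] (i : K →ₐc[k] H) (M : Type) [AddCommGroup M] [Module k M]
    [Module H M] [IsScalarTower k H M] : Type := M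

section ResMod2

variable (K H : Type) [Ring K] [Ring H] [HopfAlgebra k K] [HopfAlgebra k H]
variable (i : K →ₐc[k] H)
variable (M : Type) [AddCommGroup M] [Module k M] [Module H M] [IsScalarTower k H M]

instance : AddCommGroup (ResMod k K H i M) := inferInstanceAs (AddCommGroup M)
instance : Module k (ResMod k K H i M) := inferInstanceAs (Module k M)

instance : Module K (ResMod k K H i M) :=
  Module.compHom M ((i : K →ₐ[k] H) : K →+* H)

instance : IsScalarTower k K (ResMod k K H i M) where
  smul_assoc c x m := by
    have h : ((i : K →ₐ[k] H) (c • x)) • (id m : M) =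
        c • (((i : K →ₐ[k] H) x) • (id m : M)) := by
      rw [map_smul, smul_assoc]
    exact h

instance [Module.Finite k M] : Module.Finite k (ResMod k K H i M) :=
  inferInstanceAs (Module.Finite k M)

end ResMod2

section Aux
open Coalgebra LinearMap

variable {M : Type} [AddCommGroup M] [Module k M]
variable {C : Type} [AddCommGroup C] [Module k C] [Coalgebra k C]

lemma sum_repr_bil {a : C} {ι : Type*} (r : Coalgebra.Repr k a ι) (φ : C →ₗ[k] C →ₗ[k] M) :
    ∑ i ∈ r.index, φ (r.left i) (r.right i) = TensorProduct.lift φ (Coalgebra.comul a) := by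
  rw [← r.eq, map_sum]; simp

lemma sum_repr_bil_congr {a : C} {ι ι' : Type*} (r : Coalgebra.Repr k a ι) (r' : Coalgebra.Repr k a ι') (φ : C →ₗ[k] C →ₗ[k] M) :
    ∑ i ∈ r.index, φ (r.left i) (r.right i) =
    ∑ i ∈ r'.index, φ (r'.left i) (r'.right i) := by
  rw [sum_repr_bil k r φ, sum_repr_bil k r' φ]

lemma sum_counit_smul {a : C} {ι : Type*} (r : Coalgebra.Repr k a ι) :
    ∑ i ∈ r.index, Coalgebra.counit (R := k) (r.left i) • r.right i = a := by
  have h := congrArg (TensorProduct.lid k C) (Coalgebra.sum_counit_tmul_eq r)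
  rw [map_sum] at h
  simpa [one_smul] using h

lemma sum_smul_counit {a : C} {ι : Type*} (r : Coalgebra.Repr k a ι) :
    ∑ i ∈ r.index, Coalgebra.counit (R := k) (r.right i) • r.left i = a := by
  have h := congrArg (TensorProduct.rid k C) (Coalgebra.sum_tmul_counit_eq r)
  rw [map_sum] at h
  simpa [one_smul] using h

lemma sum_triple {a : C} {ι κ Λ : Type*} (r : Coalgebra.Repr k a ι)
    (f₁ : (i : ι) → Coalgebra.Repr k (r.left i) κ)
    (f₂ : (i : ι) → Coalgebra.Repr k (r.right i) Λ)
    (φ : C →ₗ[k] C →ₗ[k] C →ₗ[k] M) :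
    ∑ i ∈ r.index, ∑ j ∈ (f₁ i).index, φ ((f₁ i).left j) ((f₁ i).right j) (r.right i) =
    ∑ i ∈ r.index, ∑ j ∈ (f₂ i).index, φ (r.left i) ((f₂ i).left j) ((f₂ i).right j) := by
  have h := Coalgebra.sum_tmul_tmul_eq r f₁ f₂
  have h2 := congrArg
    (TensorProduct.lift ((TensorProduct.lift.equiv (RingHom.id k) C C M).toLinearMap ∘ₗ φ)) h
  simpa [map_sum] using h2


variable {B : Type} [Ring B] [Algebra k B]

/-- Convolution product on linear maps from a coalgebra to an algebra. -/
def cP (f g : C →ₗ[k] B) : C →ₗ[k] B :=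
  (LinearMap.mul' k B) ∘ₗ (TensorProduct.map f g) ∘ₗ (Coalgebra.comul (R := k))

/-- Convolution unit. -/
def cE : C →ₗ[k] B := (Algebra.linearMap k B) ∘ₗ (Coalgebra.counit (R := k))

lemma cP_apply (f g : C →ₗ[k] B) {a : C} {ι : Type*} (r : Coalgebra.Repr k a ι) :
    cP k f g a = ∑ i ∈ r.index, f (r.left i) * g (r.right i) := by
  rw [cP, LinearMap.comp_apply, LinearMap.comp_apply, ← r.eq, map_sum, map_sum]
  simp

lemma cE_apply (a : C) : cE k (B := B) a = Coalgebra.counit (R := k) a • 1 := by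
  simp [cE, Algebra.smul_def]

lemma cP_unit_left (f : C →ₗ[k] B) : cP k (cE k) f = f := by
  ext a
  rw [cP_apply k _ _ (Coalgebra.Repr.arbitrary k a)]
  simp only [cE_apply, smul_mul_assoc, one_mul, ← map_smul, ← map_sum]
  rw [sum_counit_smul]

lemma cP_unit_right (f : C →ₗ[k] B) : cP k f (cE k) = f := by
  ext a
  rw [cP_apply k _ _ (Coalgebra.Repr.arbitrary k a)]
  simp only [cE_apply, mul_smul_comm, mul_one, ← map_smul, ← map_sum]
  rw [sum_smul_counit]

lemma cP_assoc (f g h : C →ₗ[k] B) : cP k (cP k f g) h = cP k f (cP k g h) := by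
  ext a
  set r := Coalgebra.Repr.arbitrary k a
  rw [cP_apply k _ _ r, cP_apply k _ _ r]
  have e1 : ∀ i ∈ r.index, cP k f g (r.left i) * h (r.right i) =
      ∑ j ∈ (Coalgebra.Repr.arbitrary k (r.left i)).index,
        f ((Coalgebra.Repr.arbitrary k (r.left i)).left j) *
        g ((Coalgebra.Repr.arbitrary k (r.left i)).right j) * h (r.right i) := by
    intro i _
    rw [cP_apply k _ _ (Coalgebra.Repr.arbitrary k (r.left i)), Finset.sum_mul]
  have e2 : ∀ i ∈ r.index, f (r.left i) * cP k g h (r.right i) =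
      ∑ j ∈ (Coalgebra.Repr.arbitrary k (r.right i)).index,
        f (r.left i) * (g ((Coalgebra.Repr.arbitrary k (r.right i)).left j) *
        h ((Coalgebra.Repr.arbitrary k (r.right i)).right j)) := by
    intro i _
    rw [cP_apply k _ _ (Coalgebra.Repr.arbitrary k (r.right i)), Finset.mul_sum]
  rw [Finset.sum_congr rfl e1, Finset.sum_congr rfl e2]
  have := sum_triple k r (fun i => Coalgebra.Repr.arbitrary k (r.left i))
    (fun i => Coalgebra.Repr.arbitrary k (r.right i))
    (LinearMap.mk₂ k (fun u v => LinearMap.mulLeft k (f u * g v) ∘ₗ h)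
      (fun u u' => by intro v; ext w; simp [add_mul, mul_assoc]
      )
      (fun c u => by intro v; ext w; simp [smul_mul_assoc, mul_assoc]
      )
      (fun u v v' => by ext w; simp [mul_add, add_mul, mul_assoc]
      )
      (fun c u v => by ext w; simp [mul_smul_comm, smul_mul_assoc, mul_assoc]
      ))
  simpa [mul_assoc] using this

lemma cP_inv_unique (f g m : C →ₗ[k] B) (h1 : cP k f m = cE k) (h2 : cP k m g = cE k) :
    f = g := by
  have : cP k f (cP k m g) = cP k (cP k f m) g := (cP_assoc k f m g).symm
  rwa [h2, h1, cP_unit_right, cP_unit_left] at this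


open HopfAlgebra

variable {A : Type} [Ring A] [HopfAlgebra k A]

/-- The canonical representation of `comul 1`. -/
def rOne : Coalgebra.Repr k (1 : A) ℕ where
  index := ({0} : Finset ℕ)
  left := fun _ => 1
  right := fun _ => 1
  eq := by simp [Algebra.TensorProduct.one_def]

lemma antipode_one' : antipode (R := k) (1 : A) = 1 := by
  have h := sum_mul_antipode_eq_smul (rOne k (A := A))
  simpa [rOne] using h

lemma sum_mul_repr {x y : A} {ι₁ ι₂ ι₃ : Type*} (rx : Coalgebra.Repr k x ι₁) (ry : Coalgebra.Repr k y ι₂)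
    (rxy : Coalgebra.Repr k (x * y) ι₃) (φ : A →ₗ[k] A →ₗ[k] M) :
    ∑ i ∈ rxy.index, φ (rxy.left i) (rxy.right i) =
    ∑ i ∈ rx.index, ∑ j ∈ ry.index,
      φ (rx.left i * ry.left j) (rx.right i * ry.right j) := by
  rw [sum_repr_bil k rxy φ, Bialgebra.comul_mul, ← rx.eq, ← ry.eq, Finset.sum_mul_sum]
  rw [map_sum]
  refine Finset.sum_congr rfl fun i _ => ?_
  rw [map_sum]
  refine Finset.sum_congr rfl fun j _ => ?_
  simp [Algebra.TensorProduct.tmul_mul_tmul]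

/-- The antipode is an anti-coalgebra morphism. -/
lemma comul_antipode {a : A} {ι : Type*} (r : Coalgebra.Repr k a ι) :
    Coalgebra.comul (R := k) (antipode (R := k) a) =
    ∑ i ∈ r.index, antipode (R := k) (r.right i) ⊗ₜ[k] antipode (R := k) (r.left i) := by
  set S : A →ₗ[k] A := antipode (R := k)
  set Dm : A →ₗ[k] A ⊗[k] A := Coalgebra.comul (R := k)
  set F1 : A →ₗ[k] A ⊗[k] A := Dm ∘ₗ S
  set F2 : A →ₗ[k] A ⊗[k] A :=
    (TensorProduct.map S S) ∘ₗ (TensorProduct.comm k A A).toLinearMap ∘ₗ Dm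
  have hF2 : ∀ (b : A),
      F2 b = ∑ j ∈ (ℛ k b).index, S ((ℛ k b).right j) ⊗ₜ[k] S ((ℛ k b).left j) := by
    intro b
    show (TensorProduct.map S S) ((TensorProduct.comm k A A) (Dm b)) = _
    rw [← (ℛ k b).eq, map_sum, map_sum]
    simp
  have easy : cP k Dm F1 = cE k := by
    ext b
    rw [cP_apply k _ _ (Coalgebra.Repr.arbitrary k b), cE_apply]
    calc ∑ i ∈ (ℛ k b).index, Dm ((ℛ k b).left i) * F1 ((ℛ k b).right i)
        = Dm (∑ i ∈ (ℛ k b).index, (ℛ k b).left i * S ((ℛ k b).right i)) := by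
          rw [map_sum]
          exact Finset.sum_congr rfl fun i _ => (Bialgebra.comul_mul _ _).symm
      _ = Coalgebra.counit (R := k) b • 1 := by
          rw [sum_mul_antipode_eq_smul (ℛ k b), map_smul]
          simp [Dm]
  have hard : cP k F2 Dm = cE k := by
    ext b
    set rb := Coalgebra.Repr.arbitrary k b with hrb
    rw [cP_apply k _ _ rb, cE_apply]
    have step1 : ∀ i ∈ rb.index, F2 (rb.left i) * Dm (rb.right i) =
        ∑ j ∈ (ℛ k (rb.left i)).index,
          (LinearMap.mk₂ k (fun u v => LinearMap.mulLeft k ((S v) ⊗ₜ[k] (S u)) ∘ₗ Dm)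
            (fun u u' => by intro v; ext w; simp [tmul_add, add_tmul, add_mul]
            )
            (fun c u => by
              intro v; ext w; simp [← TensorProduct.smul_tmul', smul_mul_assoc]
            )
            (fun u v v' => by ext w; simp [tmul_add, add_tmul, add_mul]
            )
            (fun c u v => by ext w; simp [← TensorProduct.smul_tmul', smul_mul_assoc]
            )) ((ℛ k (rb.left i)).left j) ((ℛ k (rb.left i)).right j) (rb.right i) := by
      intro i _
      rw [hF2 _, Finset.sum_mul]
      simp [LinearMap.mk₂_apply]
    rw [Finset.sum_congr rfl step1]
    rw [sum_triple k rb (fun i => ℛ k (rb.left i)) (fun i => ℛ k (rb.right i)) _]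
    simp only [LinearMap.mk₂_apply, LinearMap.comp_apply, LinearMap.mulLeft_apply]
    have step2 : ∀ i ∈ rb.index,
        ∑ j ∈ (ℛ k (rb.right i)).index,
          (S ((ℛ k (rb.right i)).left j) ⊗ₜ[k] S (rb.left i)) *
            Dm ((ℛ k (rb.right i)).right j) =
        (1 : A) ⊗ₜ[k] (S (rb.left i) * rb.right i) := by
      intro i _
      set ri := rb.right i
      set rri := Coalgebra.Repr.arbitrary k ri with hrri
      have expand : ∀ j ∈ rri.index,
          (S (rri.left j) ⊗ₜ[k] S (rb.left i)) * Dm (rri.right j) =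
          ∑ w ∈ (ℛ k (rri.right j)).index,
            (LinearMap.mk₂ k
              (fun u v => (TensorProduct.mk k A A (S u * v)) ∘ₗ LinearMap.mulLeft k (S (rb.left i)))
              (fun u u' => by intro v; ext w; simp [add_mul, add_tmul]
              )
              (fun c u => by intro v; ext w; simp [smul_mul_assoc, smul_tmul']
              )
              (fun u v v' => by ext w; simp [mul_add, add_tmul]
              )
              (fun c u v => by ext w; simp [mul_smul_comm, smul_tmul']
              )) (rri.left j) ((ℛ k (rri.right j)).left w) ((ℛ k (rri.right j)).right w) := by
        intro j _
        rw [show Dm (rri.right j) = ∑ w ∈ (ℛ k (rri.right j)).index,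
            (ℛ k (rri.right j)).left w ⊗ₜ[k] (ℛ k (rri.right j)).right w from
          ((ℛ k (rri.right j)).eq).symm, Finset.mul_sum]
        simp [Algebra.TensorProduct.tmul_mul_tmul]
      rw [Finset.sum_congr rfl expand]
      rw [← sum_triple k rri (fun j => ℛ k (rri.left j)) (fun j => ℛ k (rri.right j)) _]
      simp only [LinearMap.mk₂_apply, LinearMap.comp_apply, LinearMap.mulLeft_apply,
        TensorProduct.mk_apply]
      calc ∑ j ∈ rri.index, ∑ w ∈ (ℛ k (rri.left j)).index,
            (S ((ℛ k (rri.left j)).left w) * (ℛ k (rri.left j)).right w) ⊗ₜ[k]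
              (S (rb.left i) * rri.right j)
          = ∑ j ∈ rri.index, (1 : A) ⊗ₜ[k] (Coalgebra.counit (R := k) (rri.left j) •
              (S (rb.left i) * rri.right j)) := by
            refine Finset.sum_congr rfl fun j _ => ?_
            rw [← TensorProduct.sum_tmul, sum_antipode_mul_eq_smul (ℛ k (rri.left j))]
            rw [TensorProduct.smul_tmul]
        _ = (1 : A) ⊗ₜ[k] (S (rb.left i) * ri) := by
            simp only [← TensorProduct.tmul_sum]
            congr 1
            calc ∑ j ∈ rri.index, Coalgebra.counit (R := k) (rri.left j) •
                  (S (rb.left i) * rri.right j)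
                = S (rb.left i) * ∑ j ∈ rri.index,
                    Coalgebra.counit (R := k) (rri.left j) • rri.right j := by
                  rw [Finset.mul_sum]
                  exact Finset.sum_congr rfl fun j _ => (mul_smul_comm _ _ _).symm
              _ = S (rb.left i) * ri := by rw [sum_counit_smul]
    rw [Finset.sum_congr rfl step2, ← TensorProduct.tmul_sum,
      sum_antipode_mul_eq_smul rb]
    simp [Algebra.TensorProduct.one_def]
  have final : F2 = F1 := cP_inv_unique k F2 F1 Dm hard easy
  have : F1 a = F2 a := by rw [final]
  rw [show Coalgebra.comul (R := k) (antipode (R := k) a) = F1 a from rfl, this]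
  show (TensorProduct.map S S) ((TensorProduct.comm k A A) (Dm a)) = _
  rw [← r.eq, map_sum, map_sum]
  simp


variable {K : Type} [Ring K] [HopfAlgebra k K]

/-- Push a Sweedler representation forward along a bialgebra morphism. -/
def rPush (i : K →ₐc[k] A) {a : K} {ι : Type*} (r : Coalgebra.Repr k a ι) : Coalgebra.Repr k (i a) ι where
  index := r.index
  left := fun j => i (r.left j)
  right := fun j => i (r.right j)
  eq := by
    have h := congrArg (TensorProduct.map (i : K →ₗ[k] A) (i : K →ₗ[k] A)) r.eq
    rw [map_sum] at h
    simpa using h.trans (CoalgHomClass.map_comp_comul_apply i a)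

/-- A bialgebra morphism of Hopf algebras commutes with the antipodes. -/
lemma map_antipode (i : K →ₐc[k] A) (x : K) :
    i (antipode (R := k) x) = antipode (R := k) (i x) := by
  set f : K →ₗ[k] A := i.toLinearMap ∘ₗ antipode (R := k)
  set g : K →ₗ[k] A := (antipode (R := k) : A →ₗ[k] A) ∘ₗ i.toLinearMap
  have h1 : cP k f i.toLinearMap = cE k := by
    ext b
    rw [cP_apply k _ _ (ℛ k b), cE_apply]
    calc ∑ j ∈ (ℛ k b).index, f ((ℛ k b).left j) * i ((ℛ k b).right j)
        = i (∑ j ∈ (ℛ k b).index, antipode (R := k) ((ℛ k b).left j) * (ℛ k b).right j) := by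
          rw [map_sum]
          exact Finset.sum_congr rfl fun j _ => (map_mul i _ _).symm
      _ = Coalgebra.counit (R := k) b • 1 := by
          rw [sum_antipode_mul_eq_smul (ℛ k b)]
          rw [map_smul, map_one]
  have h2 : cP k i.toLinearMap g = cE k := by
    ext b
    rw [cP_apply k _ _ (ℛ k b), cE_apply]
    have : ∑ j ∈ (ℛ k b).index, i.toLinearMap ((ℛ k b).left j) * g ((ℛ k b).right j) =
        ∑ j ∈ (rPush k i (ℛ k b)).index, (rPush k i (ℛ k b)).left j *
          antipode (R := k) ((rPush k i (ℛ k b)).right j) := rfl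
    rw [this, sum_mul_antipode_eq_smul (rPush k i (ℛ k b))]
    have hc : Coalgebra.counit (R := k) (i b) = Coalgebra.counit (R := k) b :=
      CoalgHomClass.counit_comp_apply i b
    rw [show (i b : A) = i b from rfl] at hc ⊢
    rw [hc]
  have := cP_inv_unique k f g i.toLinearMap h1 h2
  exact LinearMap.congr_fun this x


section IntegralIds

variable (t : Module.Dual k A)

/-- `t` is a left-integral functional: `∑ x₁ t(x₂) = t(x) • 1`. -/
def IsIntL : Prop := ∀ x : A,
  ∑ i ∈ (ℛ k x).index, t ((ℛ k x).right i) • (ℛ k x).left i = t x • 1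

/-- `t` is a right-integral functional: `∑ t(x₁) x₂ = t(x) • 1`. -/
def IsIntR : Prop := ∀ x : A,
  ∑ i ∈ (ℛ k x).index, t ((ℛ k x).left i) • (ℛ k x).right i = t x • 1

lemma isIntL_repr {t : Module.Dual k A} (h : IsIntL k t) (x : A) {ι : Type*} (r : Coalgebra.Repr k x ι) :
    ∑ i ∈ r.index, t (r.right i) • r.left i = t x • 1 := by
  have := sum_repr_bil_congr k r (ℛ k x) (((LinearMap.lsmul k A).comp t).flip)
  simp only [LinearMap.flip_apply, LinearMap.comp_apply, LinearMap.lsmul_apply] at this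
  rw [this, h x]

lemma isIntR_repr {t : Module.Dual k A} (h : IsIntR k t) (x : A) {ι : Type*} (r : Coalgebra.Repr k x ι) :
    ∑ i ∈ r.index, t (r.left i) • r.right i = t x • 1 := by
  have := sum_repr_bil_congr k r (ℛ k x) ((LinearMap.lsmul k A).comp t)
  simp only [LinearMap.comp_apply, LinearMap.lsmul_apply] at this
  rw [this, h x]

lemma idA (hR : IsIntR k t) (x a : A)
    {ι₁ ι₂ : Type*} (rx : Coalgebra.Repr k x ι₁) (ra : Coalgebra.Repr k a ι₂) :
    ∑ i ∈ rx.index, t (rx.left i * a) • rx.right i =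
    ∑ j ∈ ra.index, t (x * ra.left j) • antipode (R := k) (ra.right j) := by
  classical
  set S : A →ₗ[k] A := antipode (R := k) with hSdef
  set φ : A →ₗ[k] A →ₗ[k] A →ₗ[k] A := LinearMap.mk₂ k
    (fun u v => ∑ i ∈ rx.index, t (rx.left i * u) •
        (LinearMap.mulLeft k (rx.right i * v) ∘ₗ S))
    (fun u u' => by
      intro v; ext w
      simp [mul_add, add_smul, Finset.sum_add_distrib]
      )
    (fun c u => by
      intro v; ext w
      simp [mul_smul_comm, smul_smul, Finset.smul_sum]
      )
    (fun u v v' => by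
      ext w
      simp [mul_add, add_mul, add_smul, smul_add, Finset.sum_add_distrib, mul_assoc]
      )
    (fun c u v => by
      ext w
      simp [mul_smul_comm, smul_smul, smul_mul_assoc, Finset.smul_sum, smul_comm, mul_assoc,
        mul_comm]
      ) with hφdef
  have hφ : ∀ u v w, φ u v w =
      ∑ i ∈ rx.index, t (rx.left i * u) • (rx.right i * v * S w) := by
    intro u v w
    simp [hφdef, mul_assoc]
  have lhs1 : ∑ i ∈ rx.index, t (rx.left i * a) • rx.right i =
      ∑ j ∈ ra.index, ∑ w ∈ (ℛ k (ra.right j)).index,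
        φ (ra.left j) ((ℛ k (ra.right j)).left w) ((ℛ k (ra.right j)).right w) := by
    have hsc : ∀ b : A, t (b * a) =
        ∑ j ∈ ra.index, Coalgebra.counit (R := k) (ra.right j) * t (b * ra.left j) := by
      intro b
      conv_lhs => rw [← sum_smul_counit k ra]
      rw [Finset.mul_sum, map_sum]
      refine Finset.sum_congr rfl fun j _ => ?_
      rw [mul_smul_comm, map_smul, smul_eq_mul]
    have expand_a : ∀ i ∈ rx.index, t (rx.left i * a) • rx.right i =
        ∑ j ∈ ra.index, Coalgebra.counit (R := k) (ra.right j) •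
          (t (rx.left i * ra.left j) • rx.right i) := by
      intro i _
      rw [hsc, Finset.sum_smul]
      exact Finset.sum_congr rfl fun j _ => (smul_smul _ _ _).symm
    rw [Finset.sum_congr rfl expand_a, Finset.sum_comm]
    refine Finset.sum_congr rfl fun j _ => ?_
    have collapse : ∀ i ∈ rx.index,
        Coalgebra.counit (R := k) (ra.right j) • (t (rx.left i * ra.left j) • rx.right i) =
        ∑ w ∈ (ℛ k (ra.right j)).index, t (rx.left i * ra.left j) •
          (rx.right i * ((ℛ k (ra.right j)).left w * S ((ℛ k (ra.right j)).right w))) := by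
      intro i _
      rw [smul_comm, ← Finset.smul_sum]
      congr 1
      calc Coalgebra.counit (R := k) (ra.right j) • rx.right i
          = rx.right i * (Coalgebra.counit (R := k) (ra.right j) • 1) := by
            rw [mul_smul_comm, mul_one]
        _ = ∑ w ∈ (ℛ k (ra.right j)).index, rx.right i *
              ((ℛ k (ra.right j)).left w * S ((ℛ k (ra.right j)).right w)) := by
            rw [← sum_mul_antipode_eq_smul (ℛ k (ra.right j)), Finset.mul_sum]
    rw [Finset.sum_congr rfl collapse, Finset.sum_comm]
    refine Finset.sum_congr rfl fun w _ => ?_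
    rw [hφ]
    refine Finset.sum_congr rfl fun i _ => ?_
    rw [mul_assoc]
  rw [lhs1, ← sum_triple k ra (fun j => ℛ k (ra.left j)) (fun j => ℛ k (ra.right j)) φ]
  refine Finset.sum_congr rfl fun j _ => ?_
  have inner : ∑ w ∈ (ℛ k (ra.left j)).index,
      φ ((ℛ k (ra.left j)).left w) ((ℛ k (ra.left j)).right w) (ra.right j) =
      ∑ w ∈ (ℛ k (ra.left j)).index, ∑ i ∈ rx.index,
        t (rx.left i * (ℛ k (ra.left j)).left w) •
          (rx.right i * (ℛ k (ra.left j)).right w * S (ra.right j)) := by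
    refine Finset.sum_congr rfl fun w _ => ?_
    rw [hφ]
  rw [inner, Finset.sum_comm]
  set ψ : A →ₗ[k] A →ₗ[k] A := LinearMap.mk₂ k
    (fun u v => t u • (v * S (ra.right j)))
    (fun u u' => by simp [add_smul])
    (fun c u => by simp [smul_smul])
    (fun u v v' => by simp [add_mul, smul_add])
    (fun c u v => by rw [smul_mul_assoc, smul_comm]
      ) with hψdef
  have hmr := sum_mul_repr k rx (ℛ k (ra.left j)) (ℛ k (x * ra.left j)) ψ
  have lhs2 : ∑ i ∈ rx.index, ∑ w ∈ (ℛ k (ra.left j)).index,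
      t (rx.left i * (ℛ k (ra.left j)).left w) •
        (rx.right i * (ℛ k (ra.left j)).right w * S (ra.right j)) =
      ∑ i ∈ (ℛ k (x * ra.left j)).index,
        t ((ℛ k (x * ra.left j)).left i) • ((ℛ k (x * ra.left j)).right i * S (ra.right j)) := by
    calc ∑ i ∈ rx.index, ∑ w ∈ (ℛ k (ra.left j)).index,
          t (rx.left i * (ℛ k (ra.left j)).left w) •
            (rx.right i * (ℛ k (ra.left j)).right w * S (ra.right j))
        = ∑ i ∈ rx.index, ∑ w ∈ (ℛ k (ra.left j)).index,
            ψ (rx.left i * (ℛ k (ra.left j)).left w)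
              (rx.right i * (ℛ k (ra.left j)).right w) := by
          simp only [hψdef, LinearMap.mk₂_apply]
      _ = ∑ i ∈ (ℛ k (x * ra.left j)).index,
            ψ ((ℛ k (x * ra.left j)).left i) ((ℛ k (x * ra.left j)).right i) := hmr.symm
      _ = ∑ i ∈ (ℛ k (x * ra.left j)).index, t ((ℛ k (x * ra.left j)).left i) •
            ((ℛ k (x * ra.left j)).right i * S (ra.right j)) := by
          simp only [hψdef, LinearMap.mk₂_apply]
  rw [lhs2]
  calc ∑ i ∈ (ℛ k (x * ra.left j)).index, t ((ℛ k (x * ra.left j)).left i) •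
        ((ℛ k (x * ra.left j)).right i * S (ra.right j))
      = (∑ i ∈ (ℛ k (x * ra.left j)).index, t ((ℛ k (x * ra.left j)).left i) •
          (ℛ k (x * ra.left j)).right i) * S (ra.right j) := by
        rw [Finset.sum_mul]
        exact Finset.sum_congr rfl fun i _ => (smul_mul_assoc _ _ _).symm
    _ = t (x * ra.left j) • S (ra.right j) := by
        rw [isIntR_repr k hR (x * ra.left j) (ℛ k (x * ra.left j)), smul_mul_assoc, one_mul]


lemma idB (hL : IsIntL k t) (x a : A)
    {ι₁ ι₂ : Type*} (rx : Coalgebra.Repr k x ι₁) (ra : Coalgebra.Repr k a ι₂) :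
    ∑ i ∈ rx.index, t (a * rx.right i) • rx.left i =
    ∑ j ∈ ra.index, t (ra.right j * x) • antipode (R := k) (ra.left j) := by
  classical
  set S : A →ₗ[k] A := antipode (R := k) with hSdef
  set φ : A →ₗ[k] A →ₗ[k] A →ₗ[k] A := LinearMap.mk₂ k
    (fun u v => ∑ i ∈ rx.index,
      LinearMap.smulRight (t ∘ₗ LinearMap.mulRight k (rx.right i)) (S u * v * rx.left i))
    (fun u u' => by
      intro v; ext w
      simp [map_add, add_mul, smul_add, Finset.sum_add_distrib]
      )
    (fun c u => by
      intro v; ext w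
      simp only [LinearMap.smulRight_apply, LinearMap.sum_apply, LinearMap.smul_apply,
        map_smul, smul_mul_assoc, Finset.smul_sum, LinearMap.comp_apply,
        LinearMap.mulRight_apply]
      refine Finset.sum_congr rfl fun i _ => ?_
      rw [smul_comm]
      )
    (fun u v v' => by
      ext w
      simp [mul_add, add_mul, smul_add, Finset.sum_add_distrib]
      )
    (fun c u v => by
      ext w
      simp only [LinearMap.smulRight_apply, LinearMap.sum_apply, LinearMap.smul_apply,
        mul_smul_comm, smul_mul_assoc, Finset.smul_sum, LinearMap.comp_apply,
        LinearMap.mulRight_apply]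
      refine Finset.sum_congr rfl fun i _ => ?_
      rw [smul_comm]
      ) with hφdef
  have hφ : ∀ u v w, φ u v w =
      ∑ i ∈ rx.index, t (w * rx.right i) • (S u * v * rx.left i) := by
    intro u v w
    simp [hφdef]
  have hsc : ∀ b : A, t (a * b) =
      ∑ j ∈ ra.index, Coalgebra.counit (R := k) (ra.left j) * t (ra.right j * b) := by
    intro b
    conv_lhs => rw [← sum_counit_smul k ra]
    rw [Finset.sum_mul, map_sum]
    refine Finset.sum_congr rfl fun j _ => ?_
    rw [smul_mul_assoc, map_smul, smul_eq_mul]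
  have lhs1 : ∑ i ∈ rx.index, t (a * rx.right i) • rx.left i =
      ∑ j ∈ ra.index, ∑ w ∈ (ℛ k (ra.left j)).index,
        φ ((ℛ k (ra.left j)).left w) ((ℛ k (ra.left j)).right w) (ra.right j) := by
    have expand_a : ∀ i ∈ rx.index, t (a * rx.right i) • rx.left i =
        ∑ j ∈ ra.index, Coalgebra.counit (R := k) (ra.left j) •
          (t (ra.right j * rx.right i) • rx.left i) := by
      intro i _
      rw [hsc, Finset.sum_smul]
      exact Finset.sum_congr rfl fun j _ => (smul_smul _ _ _).symm
    rw [Finset.sum_congr rfl expand_a, Finset.sum_comm]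
    refine Finset.sum_congr rfl fun j _ => ?_
    have collapse : ∀ i ∈ rx.index,
        Coalgebra.counit (R := k) (ra.left j) • (t (ra.right j * rx.right i) • rx.left i) =
        ∑ w ∈ (ℛ k (ra.left j)).index, t (ra.right j * rx.right i) •
          (S ((ℛ k (ra.left j)).left w) * (ℛ k (ra.left j)).right w * rx.left i) := by
      intro i _
      rw [smul_comm, ← Finset.smul_sum]
      congr 1
      calc Coalgebra.counit (R := k) (ra.left j) • rx.left i
          = (Coalgebra.counit (R := k) (ra.left j) • 1) * rx.left i := by
            rw [smul_mul_assoc, one_mul]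
        _ = ∑ w ∈ (ℛ k (ra.left j)).index,
              S ((ℛ k (ra.left j)).left w) * (ℛ k (ra.left j)).right w * rx.left i := by
            rw [← sum_antipode_mul_eq_smul (ℛ k (ra.left j)), Finset.sum_mul]
    rw [Finset.sum_congr rfl collapse, Finset.sum_comm]
    refine Finset.sum_congr rfl fun w _ => ?_
    rw [hφ]
  rw [lhs1, sum_triple k ra (fun j => ℛ k (ra.left j)) (fun j => ℛ k (ra.right j)) φ]
  refine Finset.sum_congr rfl fun j _ => ?_
  have inner : ∑ w ∈ (ℛ k (ra.right j)).index,
      φ (ra.left j) ((ℛ k (ra.right j)).left w) ((ℛ k (ra.right j)).right w) =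
      ∑ w ∈ (ℛ k (ra.right j)).index, ∑ i ∈ rx.index,
        t ((ℛ k (ra.right j)).right w * rx.right i) •
          (S (ra.left j) * ((ℛ k (ra.right j)).left w * rx.left i)) := by
    refine Finset.sum_congr rfl fun w _ => ?_
    rw [hφ]
    exact Finset.sum_congr rfl fun i _ => by rw [mul_assoc]
  rw [inner]
  set ψ : A →ₗ[k] A →ₗ[k] A := LinearMap.mk₂ k
    (fun u v => t v • (S (ra.left j) * u))
    (fun u u' => by intro v; simp only [mul_add, smul_add])
    (fun c u => by intro v; simp only [mul_smul_comm]; rw [smul_comm])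
    (fun u v v' => by simp only [map_add, add_smul])
    (fun c u v => by simp only [map_smul, smul_eq_mul, mul_smul]) with hψdef
  have hmr := sum_mul_repr k (ℛ k (ra.right j)) rx (ℛ k (ra.right j * x)) ψ
  have lhs2 : ∑ w ∈ (ℛ k (ra.right j)).index, ∑ i ∈ rx.index,
      t ((ℛ k (ra.right j)).right w * rx.right i) •
        (S (ra.left j) * ((ℛ k (ra.right j)).left w * rx.left i)) =
      ∑ w ∈ (ℛ k (ra.right j * x)).index, t ((ℛ k (ra.right j * x)).right w) •
        (S (ra.left j) * (ℛ k (ra.right j * x)).left w) := by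
    calc ∑ w ∈ (ℛ k (ra.right j)).index, ∑ i ∈ rx.index,
          t ((ℛ k (ra.right j)).right w * rx.right i) •
            (S (ra.left j) * ((ℛ k (ra.right j)).left w * rx.left i))
        = ∑ w ∈ (ℛ k (ra.right j)).index, ∑ i ∈ rx.index,
            ψ ((ℛ k (ra.right j)).left w * rx.left i)
              ((ℛ k (ra.right j)).right w * rx.right i) := by
          simp only [hψdef, LinearMap.mk₂_apply]
      _ = ∑ w ∈ (ℛ k (ra.right j * x)).index,
            ψ ((ℛ k (ra.right j * x)).left w) ((ℛ k (ra.right j * x)).right w) := hmr.symm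
      _ = ∑ w ∈ (ℛ k (ra.right j * x)).index, t ((ℛ k (ra.right j * x)).right w) •
            (S (ra.left j) * (ℛ k (ra.right j * x)).left w) := by
          simp only [hψdef, LinearMap.mk₂_apply]
  rw [lhs2]
  calc ∑ w ∈ (ℛ k (ra.right j * x)).index, t ((ℛ k (ra.right j * x)).right w) •
        (S (ra.left j) * (ℛ k (ra.right j * x)).left w)
      = S (ra.left j) * ∑ w ∈ (ℛ k (ra.right j * x)).index,
          t ((ℛ k (ra.right j * x)).right w) • (ℛ k (ra.right j * x)).left w := by
        rw [Finset.mul_sum]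
        exact Finset.sum_congr rfl fun w _ => (mul_smul_comm _ _ _).symm
    _ = t (ra.right j * x) • S (ra.left j) := by
        rw [isIntL_repr k hL (ra.right j * x) (ℛ k (ra.right j * x)), mul_smul_comm, mul_one]


lemma trace_smulRight' [FiniteDimensional k A] (f : A →ₗ[k] k) (v : A) :
    LinearMap.trace k A (LinearMap.smulRight f v) = f v := by
  have h1 : LinearMap.smulRight f v = (LinearMap.toSpanSingleton k A v) ∘ₗ f := by
    ext w; simp [LinearMap.toSpanSingleton_apply]
  rw [h1, LinearMap.trace_comp_comm']
  have h2 : f ∘ₗ LinearMap.toSpanSingleton k A v = f v • LinearMap.id := by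
    ext c
    simp [LinearMap.toSpanSingleton_apply, mul_comm]
  rw [h2, map_smul, LinearMap.trace_id, Module.finrank_self]
  simp

lemma exists_leftIntegral [IsSemisimpleRing A] :
    ∃ Λ : A, Coalgebra.counit (R := k) Λ = 1 ∧
      ∀ h : A, h * Λ = Coalgebra.counit (R := k) h • Λ := by
  classical
  set J : Ideal A := RingHom.ker (Bialgebra.counitAlgHom k A).toRingHom with hJ
  obtain ⟨I, hI⟩ := exists_isCompl (J : Submodule A A)
  have hε : ∀ v : A, v ∈ J ↔ Coalgebra.counit (R := k) v = 0 := by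
    intro v
    rw [hJ, RingHom.mem_ker]
    rfl
  have hex : ∃ v ∈ I, Coalgebra.counit (R := k) v ≠ 0 := by
    by_contra hc
    push_neg at hc
    have hIJ : I ≤ J := fun v hv => (hε v).2 (hc v hv)
    have hIbot : I = ⊥ := hI.symm.disjoint.eq_bot_of_le hIJ
    have hJtop : J = (⊤ : Submodule A A) := by
      have := hI.sup_eq_top
      rwa [hIbot, sup_bot_eq] at this
    have h1 : (1 : A) ∈ J := hJtop ▸ Submodule.mem_top
    have := (hε 1).1 h1
    rw [Bialgebra.counit_one] at this
    exact one_ne_zero this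
  obtain ⟨v, hvI, hv0⟩ := hex
  refine ⟨(Coalgebra.counit (R := k) v)⁻¹ • v, ?_, ?_⟩
  · rw [map_smul, smul_eq_mul, inv_mul_cancel₀ hv0]
  · intro h
    set Λ := (Coalgebra.counit (R := k) v)⁻¹ • v with hΛ
    have hεΛ : Coalgebra.counit (R := k) Λ = 1 := by
      rw [hΛ, map_smul, smul_eq_mul, inv_mul_cancel₀ hv0]
    have hΛI : Λ ∈ I := by
      rw [hΛ, ← algebraMap_smul A ((Coalgebra.counit (R := k) v)⁻¹) v]
      exact I.smul_mem _ hvI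
    have hd1 : h * Λ - Coalgebra.counit (R := k) h • Λ ∈ I := by
      refine Submodule.sub_mem I ?_ ?_
      · have : h * Λ = h • Λ := rfl
        rw [this]
        exact I.smul_mem h hΛI
      · rw [← algebraMap_smul A (Coalgebra.counit (R := k) h) Λ]
        exact I.smul_mem _ hΛI
    have hd2 : h * Λ - Coalgebra.counit (R := k) h • Λ ∈ J := by
      rw [hε]
      simp [Bialgebra.counit_mul, smul_eq_mul, inv_mul_cancel₀ hv0]
    have : h * Λ - Coalgebra.counit (R := k) h • Λ ∈ I ⊓ (J : Submodule A A) := ⟨hd1, hd2⟩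
    rw [inf_comm, hI.inf_eq_bot] at this
    have h0 := Submodule.mem_bot A |>.1 this
    exact sub_eq_zero.1 h0

end IntegralIds

lemma integral_symm_inj [FiniteDimensional k A] [IsSemisimpleRing A]
    (t : Module.Dual k A) (hL : IsIntL k t) (h1 : t 1 = 1)
    (hS : ∀ x : A, antipode (R := k) (antipode (R := k) x : A) = x) :
    (∀ a b : A, t (a * b) = t (b * a)) ∧ (∀ a : A, (∀ b, t (b * a) = 0) → a = 0) := by
  classical
  obtain ⟨Λ, hεΛ, hΛ⟩ := exists_leftIntegral k (A := A)
  set rΛ := Coalgebra.Repr.arbitrary k Λ with hrΛ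
  have star1 : ∀ a : A, ∑ i ∈ rΛ.index, t (a * rΛ.right i) • rΛ.left i =
      t Λ • antipode (R := k) a := by
    intro a
    rw [idB k t hL Λ a rΛ (ℛ k a)]
    calc ∑ j ∈ (ℛ k a).index, t ((ℛ k a).right j * Λ) • antipode (R := k) ((ℛ k a).left j)
        = ∑ j ∈ (ℛ k a).index, t Λ • (Coalgebra.counit (R := k) ((ℛ k a).right j) •
            antipode (R := k) ((ℛ k a).left j)) := by
          refine Finset.sum_congr rfl fun j _ => ?_
          rw [hΛ, map_smul, smul_eq_mul, mul_comm, ← smul_smul]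
      _ = t Λ • antipode (R := k) a := by
          rw [← Finset.smul_sum]
          congr 1
          calc ∑ j ∈ (ℛ k a).index, Coalgebra.counit (R := k) ((ℛ k a).right j) •
                antipode (R := k) ((ℛ k a).left j)
              = antipode (R := k) (∑ j ∈ (ℛ k a).index,
                  Coalgebra.counit (R := k) ((ℛ k a).right j) • (ℛ k a).left j) := by
                rw [map_sum]
                exact Finset.sum_congr rfl fun j _ => (map_smul _ _ _).symm
            _ = antipode (R := k) a := by rw [sum_smul_counit]
  have dag1 : ∀ a : A, ∑ i ∈ rΛ.index, t (a * rΛ.right i) •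
      antipode (R := k) (rΛ.left i) = t Λ • a := by
    intro a
    have := congrArg (antipode (R := k)) (star1 a)
    rw [map_sum, map_smul, hS a] at this
    calc ∑ i ∈ rΛ.index, t (a * rΛ.right i) • antipode (R := k) (rΛ.left i)
        = ∑ i ∈ rΛ.index, antipode (R := k) (t (a * rΛ.right i) • rΛ.left i) := by
          exact Finset.sum_congr rfl fun i _ => (map_smul _ _ _).symm
      _ = t Λ • a := this
  have hD : (∑ i ∈ rΛ.index, LinearMap.smulRight
      (t ∘ₗ LinearMap.mulRight k (rΛ.right i)) (antipode (R := k) (rΛ.left i))) =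
      t Λ • LinearMap.id := by
    ext a
    simpa using dag1 a
  have t_tr : ∀ x : A, t Λ * LinearMap.trace k A (LinearMap.mulLeft k x) = t x := by
    intro x
    have e1 : LinearMap.trace k A (LinearMap.mulLeft k x ∘ₗ (t Λ • LinearMap.id)) =
        t Λ * LinearMap.trace k A (LinearMap.mulLeft k x) := by
      have : LinearMap.mulLeft k x ∘ₗ (t Λ • LinearMap.id) = t Λ • LinearMap.mulLeft k x := by
        ext w; simp
      rw [this, map_smul, smul_eq_mul]
    have e2 : LinearMap.mulLeft k x ∘ₗ (t Λ • LinearMap.id) =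
        ∑ i ∈ rΛ.index, LinearMap.smulRight
          (t ∘ₗ LinearMap.mulRight k (rΛ.right i)) (x * antipode (R := k) (rΛ.left i)) := by
      rw [← hD]
      ext a
      simp [Finset.mul_sum, mul_smul_comm]
    rw [← e1, e2, map_sum]
    calc ∑ i ∈ rΛ.index, LinearMap.trace k A (LinearMap.smulRight
          (t ∘ₗ LinearMap.mulRight k (rΛ.right i)) (x * antipode (R := k) (rΛ.left i)))
        = ∑ i ∈ rΛ.index, t (x * (antipode (R := k) (rΛ.left i) * rΛ.right i)) := by
          refine Finset.sum_congr rfl fun i _ => ?_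
          rw [trace_smulRight']
          simp [mul_assoc]
      _ = t (x * ∑ i ∈ rΛ.index, antipode (R := k) (rΛ.left i) * rΛ.right i) := by
          rw [Finset.mul_sum, map_sum]
      _ = t x := by
          rw [sum_antipode_mul_eq_smul rΛ, hεΛ, one_smul, mul_one]
  have htΛ : t Λ ≠ 0 := by
    intro h0
    have := t_tr 1
    rw [h0, zero_mul, h1] at this
    exact one_ne_zero this.symm
  have hsymm : ∀ a b : A, t (a * b) = t (b * a) := by
    intro a b
    rw [← t_tr (a * b), ← t_tr (b * a)]
    congr 1
    rw [LinearMap.mulLeft_mul, LinearMap.mulLeft_mul, ← Module.End.mul_eq_comp,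
      ← Module.End.mul_eq_comp, LinearMap.trace_mul_comm]
  refine ⟨hsymm, ?_⟩
  intro a ha
  have := dag1 a
  have hz : ∀ i ∈ rΛ.index, t (a * rΛ.right i) • antipode (R := k) (rΛ.left i) = 0 := by
    intro i _
    rw [hsymm a (rΛ.right i), ha, zero_smul]
  rw [Finset.sum_congr rfl hz, Finset.sum_const_zero] at this
  have := this.symm
  rw [smul_eq_zero] at this
  exact this.resolve_left htΛ

end Aux

section MainHelpers
open Coalgebra HopfAlgebra

variable {C : Type} [AddCommGroup C] [Module k C] [Coalgebra k C]

lemma conv_repr (f g : Module.Dual k C) (x : C) {ι : Type*} (r : Coalgebra.Repr k x ι) :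
    conv k C f g x = ∑ p ∈ r.index, f (r.left p) * g (r.right p) := by
  rw [conv, LinearMap.comp_apply, LinearMap.comp_apply, ← r.eq, map_sum, map_sum]
  simp

variable {A : Type} [Ring A] [HopfAlgebra k A]

lemma sandwich_tmul (p q x : A) : sandwich k A (p ⊗ₜ[k] q) x = p * (x * q) := rfl

lemma fourier_apply' (t : Module.Dual k A) (a x : A) : fourier k A t a x = t (x * a) := rfl

lemma coad_repr (a : A) (f : Module.Dual k A) (x : A) {ι : Type*} (r : Coalgebra.Repr k a ι) :
    coadAct k A a f x = ∑ j ∈ r.index,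
      f (antipode (R := k) (r.right j) * (x * r.left j)) := by
  show f ((sandwich k A ((LinearMap.rTensor A (antipode (R := k)))
      ((TensorProduct.comm k A A) (Coalgebra.comul a)))) x) = _
  rw [← r.eq, map_sum, map_sum, map_sum, LinearMap.sum_apply, map_sum]
  rfl

lemma ad_repr (a v : A) {ι : Type*} (r : Coalgebra.Repr k a ι) :
    adAct k A a v = ∑ j ∈ r.index,
      r.left j * (v * antipode (R := k) (r.right j)) := by
  show (sandwich k A ((LinearMap.lTensor A (antipode (R := k))) (Coalgebra.comul a))) v = _
  rw [← r.eq, map_sum, map_sum, LinearMap.sum_apply]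
  rfl

/-- Representation of `comul (S a)` coming from a representation of `comul a`. -/
def rAnti (a : A) : Coalgebra.Repr k (antipode (R := k) a : A) (A × A) where
  index := (ℛ k a).index
  left := fun j => antipode (R := k) ((ℛ k a).right j)
  right := fun j => antipode (R := k) ((ℛ k a).left j)
  eq := (comul_antipode k (ℛ k a)).symm

lemma coad_eq_ad (hS : ∀ x : A, antipode (R := k) (antipode (R := k) x : A) = x)
    (a : A) (f : Module.Dual k A) (v : A) :
    coadAct k A a f v = f (adAct k A (antipode (R := k) a) v) := by
  rw [coad_repr k a f v (ℛ k a)]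
  rw [ad_repr k _ v (rAnti k a)]
  rw [map_sum f (fun j => (rAnti k a).left j * (v * antipode (R := k) ((rAnti k a).right j)))
    (rAnti k a).index]
  refine Finset.sum_congr rfl fun j _ => ?_
  show f (antipode (R := k) ((ℛ k a).right j) * (v * (ℛ k a).left j)) =
    f (antipode (R := k) ((ℛ k a).right j) *
      (v * antipode (R := k) (antipode (R := k) ((ℛ k a).left j))))
  rw [hS]

end MainHelpers


open Coalgebra in
/-- for a normal Hopf subalgebra `K ⊆ H`, both `F(K)` and `K^⊥` are
`D(H)`-submodules of `H*` (i.e. stable under the coadjoint `H`-action and under left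
convolution by `H*`), each is a sum of full homogeneous components (equivalently, stable
under every `D(H)`-endomorphism of `H*`), and `H* = F(K) ⊕ K^⊥` as `D(H)`-modules. -/
theorem fourier_image_and_annihilator_are_DH_submodules
    (k : Type) [Field k] [IsAlgClosed k] [CharZero k]
    (H : Type) [Ring H] [HopfAlgebra k H] [FiniteDimensional k H] [IsSemisimpleRing H]
    (K : Type) [Ring K] [HopfAlgebra k K] [FiniteDimensional k K] [IsSemisimpleRing K]
    (i : K →ₐc[k] H) (hi : Function.Injective i)
    (hnorm : ∀ (h : H) (x : K), adAct k H h (i x) ∈ Set.range i)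
    (hS : ∀ x : H, HopfAlgebra.antipode (R := k) (HopfAlgebra.antipode (R := k) x) = x)
    (tH : Module.Dual k H)
    (htH : ∀ f : Module.Dual k H, conv k H f tH = f 1 • tH ∧ conv k H tH f = f 1 • tH)
    (htH1 : tH 1 = 1)
    :
    (∀ (a : H), ∀ f ∈ Submodule.map (fourier k H tH) (LinearMap.range i.toLinearMap),
      coadAct k H a f ∈ Submodule.map (fourier k H tH) (LinearMap.range i.toLinearMap)) ∧
    (∀ (g : Module.Dual k H),
      ∀ f ∈ Submodule.map (fourier k H tH) (LinearMap.range i.toLinearMap),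
      conv k H g f ∈ Submodule.map (fourier k H tH) (LinearMap.range i.toLinearMap)) ∧
    (∀ (a : H), ∀ f ∈ (LinearMap.range i.toLinearMap).dualAnnihilator,
      coadAct k H a f ∈ (LinearMap.range i.toLinearMap).dualAnnihilator) ∧
    (∀ (g : Module.Dual k H), ∀ f ∈ (LinearMap.range i.toLinearMap).dualAnnihilator,
      conv k H g f ∈ (LinearMap.range i.toLinearMap).dualAnnihilator) ∧
    (∀ T : Module.Dual k H →ₗ[k] Module.Dual k H,
      (∀ (a : H) (f : Module.Dual k H), T (coadAct k H a f) = coadAct k H a (T f)) →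
      (∀ (g f : Module.Dual k H), T (conv k H g f) = conv k H g (T f)) →
      (∀ f ∈ Submodule.map (fourier k H tH) (LinearMap.range i.toLinearMap),
          T f ∈ Submodule.map (fourier k H tH) (LinearMap.range i.toLinearMap)) ∧
      (∀ f ∈ (LinearMap.range i.toLinearMap).dualAnnihilator,
          T f ∈ (LinearMap.range i.toLinearMap).dualAnnihilator)) ∧
    IsCompl (Submodule.map (fourier k H tH) (LinearMap.range i.toLinearMap))
      ((LinearMap.range i.toLinearMap).dualAnnihilator) := by
  classical
  have hLt : IsIntL k tH := by
    intro x
    refine sub_eq_zero.1 ((Module.forall_dual_apply_eq_zero_iff k _).1 fun φ => ?_)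
    rw [map_sub, sub_eq_zero]
    calc φ (∑ p ∈ (ℛ k x).index, tH ((ℛ k x).right p) • (ℛ k x).left p)
        = ∑ p ∈ (ℛ k x).index, φ ((ℛ k x).left p) * tH ((ℛ k x).right p) := by
          rw [map_sum]
          exact Finset.sum_congr rfl fun p _ => by rw [map_smul, smul_eq_mul, mul_comm]
      _ = conv k H φ tH x := (conv_repr k φ tH x (ℛ k x)).symm
      _ = φ 1 * tH x := by rw [(htH φ).1, LinearMap.smul_apply, smul_eq_mul]
      _ = φ (tH x • 1) := by rw [map_smul, smul_eq_mul, mul_comm]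
  have hRt : IsIntR k tH := by
    intro x
    refine sub_eq_zero.1 ((Module.forall_dual_apply_eq_zero_iff k _).1 fun φ => ?_)
    rw [map_sub, sub_eq_zero]
    calc φ (∑ p ∈ (ℛ k x).index, tH ((ℛ k x).left p) • (ℛ k x).right p)
        = ∑ p ∈ (ℛ k x).index, tH ((ℛ k x).left p) * φ ((ℛ k x).right p) := by
          rw [map_sum]
          exact Finset.sum_congr rfl fun p _ => by rw [map_smul, smul_eq_mul]
      _ = conv k H tH φ x := (conv_repr k tH φ x (ℛ k x)).symm
      _ = φ 1 * tH x := by rw [(htH φ).2, LinearMap.smul_apply, smul_eq_mul]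
      _ = φ (tH x • 1) := by rw [map_smul, smul_eq_mul, mul_comm]
  obtain ⟨hsym, hinj⟩ := integral_symm_inj k tH hLt htH1 hS
  -- the restricted integral on K
  set tK : Module.Dual k K := tH ∘ₗ i.toLinearMap with htKdef
  have hSK : ∀ y : K, HopfAlgebra.antipode (R := k)
      (HopfAlgebra.antipode (R := k) y : K) = y := by
    intro y
    apply hi
    rw [map_antipode k i, map_antipode k i, hS]
  have hLtK : IsIntL k tK := by
    intro x
    apply hi
    have h1 := isIntL_repr k hLt (i x) (rPush k i (ℛ k x))
    calc (i (∑ j ∈ (ℛ k x).index, tK ((ℛ k x).right j) • (ℛ k x).left j) : H)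
        = ∑ j ∈ (rPush k i (ℛ k x)).index,
            tH ((rPush k i (ℛ k x)).right j) • (rPush k i (ℛ k x)).left j := by
          rw [map_sum]
          exact Finset.sum_congr rfl fun j _ => by rw [map_smul]; rfl
      _ = tH (i x) • 1 := h1
      _ = i (tK x • (1 : K)) := by rw [map_smul, map_one]; rfl
  have htK1 : tK (1 : K) = 1 := by
    have h1 : (i.toLinearMap (1 : K)) = (1 : H) := map_one i
    rw [htKdef, LinearMap.comp_apply, h1, htH1]
  obtain ⟨hsymK, hinjK⟩ := integral_symm_inj k tK hLtK htK1 hSK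
  -- normality
  have hmemR : ∀ (a : H) (y : K),
      adAct k H a (i.toLinearMap y) ∈ LinearMap.range i.toLinearMap := by
    intro a y
    obtain ⟨z, hz⟩ := hnorm a y
    exact ⟨z, hz⟩
  -- the coadjoint action intertwines with the adjoint action through the Fourier transform
  have coadFF : ∀ (a v : H), coadAct k H a (fourier k H tH v) =
      fourier k H tH (adAct k H a v) := by
    intro a v
    ext x
    rw [coad_repr k a _ x (ℛ k a), ad_repr k a v (ℛ k a)]
    calc ∑ j ∈ (ℛ k a).index, fourier k H tH v
          (HopfAlgebra.antipode (R := k) ((ℛ k a).right j) * (x * (ℛ k a).left j))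
        = ∑ j ∈ (ℛ k a).index, tH (x * ((ℛ k a).left j *
            (v * HopfAlgebra.antipode (R := k) ((ℛ k a).right j)))) := by
          refine Finset.sum_congr rfl fun j _ => ?_
          rw [fourier_apply']
          rw [mul_assoc (HopfAlgebra.antipode (R := k) ((ℛ k a).right j)) _ v]
          rw [hsym]
          simp [mul_assoc]
      _ = fourier k H tH (∑ j ∈ (ℛ k a).index, (ℛ k a).left j *
            (v * HopfAlgebra.antipode (R := k) ((ℛ k a).right j))) x := by
          rw [fourier_apply', Finset.mul_sum, map_sum]
  -- convolution from the left on the image of the Fourier transform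
  have convFF_left : ∀ (g : Module.Dual k H) (v : H), conv k H g (fourier k H tH v) =
      fourier k H tH (∑ q ∈ (ℛ k v).index,
        g (HopfAlgebra.antipode (R := k) ((ℛ k v).left q)) • (ℛ k v).right q) := by
    intro g v
    ext x
    rw [conv_repr k g _ x (ℛ k x)]
    have hB := idB k tH hLt x v (ℛ k x) (ℛ k v)
    calc ∑ p ∈ (ℛ k x).index, g ((ℛ k x).left p) * fourier k H tH v ((ℛ k x).right p)
        = g (∑ p ∈ (ℛ k x).index, tH (v * (ℛ k x).right p) • (ℛ k x).left p) := by
          rw [map_sum]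
          refine Finset.sum_congr rfl fun p _ => ?_
          rw [map_smul, smul_eq_mul, fourier_apply', hsym, mul_comm]
      _ = g (∑ q ∈ (ℛ k v).index, tH ((ℛ k v).right q * x) •
            HopfAlgebra.antipode (R := k) ((ℛ k v).left q)) := by rw [hB]
      _ = ∑ q ∈ (ℛ k v).index, g (HopfAlgebra.antipode (R := k) ((ℛ k v).left q)) *
            tH (x * (ℛ k v).right q) := by
          rw [map_sum]
          refine Finset.sum_congr rfl fun q _ => ?_
          rw [map_smul, smul_eq_mul, hsym, mul_comm]
      _ = fourier k H tH (∑ q ∈ (ℛ k v).index,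
            g (HopfAlgebra.antipode (R := k) ((ℛ k v).left q)) • (ℛ k v).right q) x := by
          rw [fourier_apply', Finset.mul_sum, map_sum]
          refine Finset.sum_congr rfl fun q _ => ?_
          rw [mul_smul_comm, map_smul, smul_eq_mul]
  -- convolution from the right on the image of the Fourier transform
  have convFF_right : ∀ (χ : Module.Dual k H) (v : H), conv k H (fourier k H tH v) χ =
      fourier k H tH (∑ q ∈ (ℛ k v).index,
        χ (HopfAlgebra.antipode (R := k) ((ℛ k v).right q)) • (ℛ k v).left q) := by
    intro χ v
    ext x
    rw [conv_repr k _ χ x (ℛ k x)]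
    have hA := idA k tH hRt x v (ℛ k x) (ℛ k v)
    calc ∑ p ∈ (ℛ k x).index, fourier k H tH v ((ℛ k x).left p) * χ ((ℛ k x).right p)
        = χ (∑ p ∈ (ℛ k x).index, tH ((ℛ k x).left p * v) • (ℛ k x).right p) := by
          rw [map_sum]
          refine Finset.sum_congr rfl fun p _ => ?_
          rw [map_smul, smul_eq_mul, fourier_apply']
      _ = χ (∑ q ∈ (ℛ k v).index, tH (x * (ℛ k v).left q) •
            HopfAlgebra.antipode (R := k) ((ℛ k v).right q)) := by rw [hA]
      _ = ∑ q ∈ (ℛ k v).index, χ (HopfAlgebra.antipode (R := k) ((ℛ k v).right q)) *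
            tH (x * (ℛ k v).left q) := by
          rw [map_sum]
          refine Finset.sum_congr rfl fun q _ => ?_
          rw [map_smul, smul_eq_mul, mul_comm]
      _ = fourier k H tH (∑ q ∈ (ℛ k v).index,
            χ (HopfAlgebra.antipode (R := k) ((ℛ k v).right q)) • (ℛ k v).left q) x := by
          rw [fourier_apply', Finset.mul_sum, map_sum]
          refine Finset.sum_congr rfl fun q _ => ?_
          rw [mul_smul_comm, map_smul, smul_eq_mul]
  -- membership of the twisted sums in the range of i
  have pushB : ∀ (g : Module.Dual k H) (y : K),
      (∑ q ∈ (ℛ k (i.toLinearMap y)).index,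
        g (HopfAlgebra.antipode (R := k) ((ℛ k (i.toLinearMap y)).left q)) •
          (ℛ k (i.toLinearMap y)).right q) ∈ LinearMap.range i.toLinearMap := by
    intro g y
    have hφ := sum_repr_bil_congr k (ℛ k (i.toLinearMap y)) (rPush k i (ℛ k y))
      ((LinearMap.lsmul k H).comp (g ∘ₗ HopfAlgebra.antipode (R := k)))
    simp only [LinearMap.comp_apply, LinearMap.lsmul_apply] at hφ
    rw [hφ]
    refine ⟨∑ q ∈ (ℛ k y).index,
      g (HopfAlgebra.antipode (R := k) ((i ((ℛ k y).left q) : H))) • (ℛ k y).right q, ?_⟩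
    rw [map_sum]
    exact Finset.sum_congr rfl fun q _ => by rw [map_smul]; rfl
  have pushA : ∀ (χ : Module.Dual k H) (y : K),
      (∑ q ∈ (ℛ k (i.toLinearMap y)).index,
        χ (HopfAlgebra.antipode (R := k) ((ℛ k (i.toLinearMap y)).right q)) •
          (ℛ k (i.toLinearMap y)).left q) ∈ LinearMap.range i.toLinearMap := by
    intro χ y
    have hφ := sum_repr_bil_congr k (ℛ k (i.toLinearMap y)) (rPush k i (ℛ k y))
      (((LinearMap.lsmul k H).comp (χ ∘ₗ HopfAlgebra.antipode (R := k))).flip)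
    simp only [LinearMap.flip_apply, LinearMap.comp_apply, LinearMap.lsmul_apply] at hφ
    rw [hφ]
    refine ⟨∑ q ∈ (ℛ k y).index,
      χ (HopfAlgebra.antipode (R := k) ((i ((ℛ k y).right q) : H))) • (ℛ k y).left q, ?_⟩
    rw [map_sum]
    exact Finset.sum_congr rfl fun q _ => by rw [map_smul]; rfl
  -- conjunct 1
  have conj1 : ∀ (a : H), ∀ f ∈ Submodule.map (fourier k H tH) (LinearMap.range i.toLinearMap),
      coadAct k H a f ∈ Submodule.map (fourier k H tH) (LinearMap.range i.toLinearMap) := by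
    intro a f hf
    obtain ⟨w, hwR, rfl⟩ := Submodule.mem_map.1 hf
    rw [coadFF a w]
    refine Submodule.mem_map_of_mem ?_
    obtain ⟨y, rfl⟩ := hwR
    exact hmemR a y
  -- conjunct 2
  have conj2 : ∀ (g : Module.Dual k H),
      ∀ f ∈ Submodule.map (fourier k H tH) (LinearMap.range i.toLinearMap),
      conv k H g f ∈ Submodule.map (fourier k H tH) (LinearMap.range i.toLinearMap) := by
    intro g f hf
    obtain ⟨w, hwR, rfl⟩ := Submodule.mem_map.1 hf
    obtain ⟨y, rfl⟩ := hwR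
    rw [convFF_left g (i.toLinearMap y)]
    exact Submodule.mem_map_of_mem (pushB g y)
  -- conjunct 3
  have conj3 : ∀ (a : H), ∀ f ∈ (LinearMap.range i.toLinearMap).dualAnnihilator,
      coadAct k H a f ∈ (LinearMap.range i.toLinearMap).dualAnnihilator := by
    intro a f hf
    rw [Submodule.mem_dualAnnihilator] at hf ⊢
    rintro w ⟨y, rfl⟩
    rw [coad_eq_ad k hS a f (i.toLinearMap y)]
    exact hf _ (hmemR (HopfAlgebra.antipode (R := k) a) y)
  -- conjunct 4
  have conj4 : ∀ (g : Module.Dual k H),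
      ∀ f ∈ (LinearMap.range i.toLinearMap).dualAnnihilator,
      conv k H g f ∈ (LinearMap.range i.toLinearMap).dualAnnihilator := by
    intro g f hf
    rw [Submodule.mem_dualAnnihilator] at hf ⊢
    rintro w ⟨y, rfl⟩
    rw [conv_repr k g f (i.toLinearMap y) (rPush k i (ℛ k y))]
    refine Finset.sum_eq_zero fun q _ => ?_
    have : f ((rPush k i (ℛ k y)).right q) = 0 := hf _ ⟨(ℛ k y).right q, rfl⟩
    rw [this, mul_zero]
  -- disjointness
  have hdisj : Disjoint (Submodule.map (fourier k H tH) (LinearMap.range i.toLinearMap))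
      ((LinearMap.range i.toLinearMap).dualAnnihilator) := by
    rw [Submodule.disjoint_def]
    intro f hf1 hf2
    obtain ⟨w, hwR, rfl⟩ := Submodule.mem_map.1 hf1
    obtain ⟨y, rfl⟩ := hwR
    rw [Submodule.mem_dualAnnihilator] at hf2
    have hy : ∀ b : K, tK (b * y) = 0 := by
      intro b
      have h0 := hf2 (i.toLinearMap b) ⟨b, rfl⟩
      calc tK (b * y) = tH (i.toLinearMap (b * y)) := rfl
        _ = tH (i.toLinearMap b * i.toLinearMap y) := by
            have : (i.toLinearMap (b * y) : H) = i.toLinearMap b * i.toLinearMap y :=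
              map_mul i b y
            rw [this]
        _ = 0 := h0
    have hy0 : y = 0 := hinjK y hy
    rw [hy0, map_zero, map_zero]
  refine ⟨conj1, conj2, conj3, conj4, ?_, ?_⟩
  · -- conjunct 5
    intro T hcoad hconv
    have hT : ∀ f, T f = conv k H f (T (Coalgebra.counit (R := k))) := by
      intro f
      have h0 : conv k H f (Coalgebra.counit (R := k)) = f := by
        ext x
        rw [conv_repr k f _ x (ℛ k x)]
        calc ∑ p ∈ (ℛ k x).index, f ((ℛ k x).left p) *
              Coalgebra.counit (R := k) ((ℛ k x).right p)
            = f (∑ p ∈ (ℛ k x).index,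
                Coalgebra.counit (R := k) ((ℛ k x).right p) • (ℛ k x).left p) := by
              rw [map_sum]
              exact Finset.sum_congr rfl fun p _ => by rw [map_smul, smul_eq_mul, mul_comm]
          _ = f x := by rw [sum_smul_counit]
      conv_lhs => rw [← h0]
      rw [hconv]
    constructor
    · intro f hf
      obtain ⟨w, hwR, rfl⟩ := Submodule.mem_map.1 hf
      obtain ⟨y, rfl⟩ := hwR
      rw [hT, convFF_right]
      exact Submodule.mem_map_of_mem (pushA _ y)
    · intro f hf
      rw [hT f]
      rw [Submodule.mem_dualAnnihilator]
      rintro w ⟨y, rfl⟩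
      rw [conv_repr k f _ (i.toLinearMap y) (rPush k i (ℛ k y))]
      refine Finset.sum_eq_zero fun q _ => ?_
      rw [Submodule.mem_dualAnnihilator] at hf
      have : f ((rPush k i (ℛ k y)).left q) = 0 := hf _ ⟨(ℛ k y).left q, rfl⟩
      rw [this, zero_mul]
  · -- conjunct 6 : IsCompl
    have hFFinj : Function.Injective (fourier k H tH) := by
      have h0 : ∀ a : H, fourier k H tH a = 0 → a = 0 := by
        intro a ha
        refine hinj a fun b => ?_
        have := DFunLike.congr_fun ha b
        simpa [fourier_apply'] using this
      intro u v huv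
      have h1 : fourier k H tH (u - v) = 0 := by rw [map_sub, huv, sub_self]
      have := h0 _ h1
      exact sub_eq_zero.1 this
    refine ⟨hdisj, ?_⟩
    rw [codisjoint_iff]
    apply Submodule.eq_top_of_finrank_eq
    have e1 : Module.finrank k
        (Submodule.map (fourier k H tH) (LinearMap.range i.toLinearMap)) =
        Module.finrank k (LinearMap.range i.toLinearMap) :=
      (LinearEquiv.finrank_eq
        (Submodule.equivMapOfInjective (fourier k H tH) hFFinj
          (LinearMap.range i.toLinearMap))).symm
    have e2 : Module.finrank k ((LinearMap.range i.toLinearMap).dualAnnihilator) =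
        Module.finrank k (H ⧸ (LinearMap.range i.toLinearMap)) := by
      exact ((Subspace.quotEquivAnnihilator (LinearMap.range i.toLinearMap)).finrank_eq).symm
    have e3 := Submodule.finrank_quotient_add_finrank (LinearMap.range i.toLinearMap)
    have e4 : Module.finrank k (Module.Dual k H) = Module.finrank k H :=
      Subspace.dual_finrank_eq
    have e5 := Submodule.finrank_sup_add_finrank_inf_eq
      (Submodule.map (fourier k H tH) (LinearMap.range i.toLinearMap))
      ((LinearMap.range i.toLinearMap).dualAnnihilator)
    rw [disjoint_iff.1 hdisj, finrank_bot, add_zero] at e5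
    omega

end Paper
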